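/- For all integers m, t, q with 0 < t < m and q ≥ 2, there exists a (C(m,t)·q^t, q^m, q^m − (q−1)^t·q^{m−t}, (q−1)^t·q^m) placement delivery array, where C(m,t) denotes the binomial coefficient. (This is the PDA obtained from Construction 1 by taking the row index set to be all of {0,...,q-1}^m and the full column index set.) -/

import Mathlib

namespace PDAConstr

/-- Encode an element of `Fin q` distinct from `b` into `Fin (q-1)`. -/
def delta {q : ℕ} (a b : Fin q) (h : a ≠ b) : Fin (q - 1) :=
  if hlt : a.val < b.val then ⟨a.val, by have := b.isLt; omega⟩
  else ⟨a.val - 1, by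
    have h1 := a.isLt
    have h2 : a.val ≠ b.val := fun he => h (Fin.ext he)
    omega⟩

/-- Decode: the `e`-th element of `Fin q \ {b}`. -/
def emb {q : ℕ} (b : Fin q) (e : Fin (q - 1)) : Fin q :=
  if e.val < b.val then ⟨e.val, by have := b.isLt; omega⟩
  else ⟨e.val + 1, by have := e.isLt; omega⟩

lemma delta_val {q : ℕ} (a b : Fin q) (h : a ≠ b) :
    (delta a b h).val = if a.val < b.val then a.val else a.val - 1 := by
  unfold delta; split <;> simp_all

lemma emb_val {q : ℕ} (b : Fin q) (e : Fin (q - 1)) :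
    (emb b e).val = if e.val < b.val then e.val else e.val + 1 := by
  unfold emb; split <;> simp_all

lemma emb_ne {q : ℕ} (b : Fin q) (e : Fin (q - 1)) : emb b e ≠ b := by
  intro h
  apply_fun Fin.val at h
  rw [emb_val] at h
  split_ifs at h <;> omega

lemma delta_emb {q : ℕ} (b : Fin q) (e : Fin (q - 1)) (h : emb b e ≠ b) :
    delta (emb b e) b h = e := by
  apply Fin.ext
  rw [delta_val, emb_val]
  have := e.isLt
  split_ifs <;> simp_all [emb_val] <;> omega

lemma delta_eq_of {q : ℕ} {a b : Fin q} {e : Fin (q - 1)} (h : a ≠ b) (he : a = emb b e) :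
    delta a b h = e := by
  subst he; exact delta_emb _ _ _

lemma emb_delta {q : ℕ} (a b : Fin q) (h : a ≠ b) : emb b (delta a b h) = a := by
  have hab : a.val ≠ b.val := fun he => h (Fin.ext he)
  apply Fin.ext
  rw [emb_val, delta_val]
  have := a.isLt
  split_ifs <;> simp_all [delta_val] <;> omega


variable {m t q : ℕ}

abbrev Row (m q : ℕ) := Fin m → Fin q
abbrev Col (m t q : ℕ) := {T : Finset (Fin m) // T.card = t} × (Fin t → Fin q)
abbrev Sym (m t q : ℕ) := (Fin t → Fin (q - 1)) × (Fin m → Fin q)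

/-- The linear-order isomorphism enumerating the `t`-set of a column. -/
def ords (c : Col m t q) : Fin t ≃o {x : Fin m // x ∈ c.1.1} := c.1.1.orderIsoOfFin c.1.2

/-- The value prescribed by column `c` at position `i` (junk off `c.1.1`). -/
def bfull [NeZero q] (c : Col m t q) (i : Fin m) : Fin q :=
  if h : i ∈ c.1.1 then c.2 ((ords c).symm ⟨i, h⟩) else 0

lemma bfull_mem [NeZero q] (c : Col m t q) {i : Fin m} (h : i ∈ c.1.1) :
    bfull c i = c.2 ((ords c).symm ⟨i, h⟩) := dif_pos h

lemma bfull_ord [NeZero q] (c : Col m t q) (j : Fin t) :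
    bfull c (ords c j) = c.2 j := by
  rw [bfull_mem c (ords c j).2]
  congr 1
  have : (⟨(ords c j : Fin m), (ords c j).2⟩ : {x : Fin m // x ∈ c.1.1}) = ords c j := rfl
  rw [this, OrderIso.symm_apply_apply]

/-- The PDA array over structured index sets. -/
def P0 [NeZero q] (f : Row m q) (c : Col m t q) : Option (Sym m t q) :=
  if h : ∀ i ∈ c.1.1, f i ≠ bfull c i then
    some (fun j => delta (f (ords c j)) (bfull c (ords c j)) (h _ (ords c j).2),
          fun i => if i ∈ c.1.1 then bfull c i else f i)
  else none

lemma P0_eq_some [NeZero q] {f : Row m q} {c : Col m t q} {s : Sym m t q}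
    (h : P0 f c = some s) :
    (∀ i ∈ c.1.1, f i ≠ bfull c i) ∧
    (∀ i ∈ c.1.1, s.2 i = bfull c i) ∧
    (∀ i ∉ c.1.1, s.2 i = f i) ∧
    (∀ j : Fin t, f (ords c j) = emb (bfull c (ords c j)) (s.1 j)) := by
  unfold P0 at h
  split at h
  case isFalse => exact absurd h (by simp)
  case isTrue hc =>
    obtain rfl : _ = s := Option.some_injective _ h
    refine ⟨hc, fun i hi => by simp [if_pos hi], fun i hi => by simp [if_neg hi], fun j => ?_⟩
    simp only
    rw [emb_delta]

lemma P0_none_iff [NeZero q] {f : Row m q} {c : Col m t q} :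
    P0 f c = none ↔ ¬ (∀ i ∈ c.1.1, f i ≠ bfull c i) := by
  unfold P0
  split <;> simp_all

/-- same column (same `T`) and same symbol forces same cell. -/
lemma P0_same_T [NeZero q] {f₁ f₂ : Row m q} {c₁ c₂ : Col m t q} {s : Sym m t q}
    (h₁ : P0 f₁ c₁ = some s) (h₂ : P0 f₂ c₂ = some s) (hT : c₁.1 = c₂.1) :
    f₁ = f₂ ∧ c₁ = c₂ := by
  obtain ⟨u, b₁⟩ := c₁
  obtain ⟨u₂, b₂⟩ := c₂
  obtain rfl : u = u₂ := hT
  obtain ⟨-, hg₁, hg₁', hd₁⟩ := P0_eq_some h₁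
  obtain ⟨-, hg₂, hg₂', hd₂⟩ := P0_eq_some h₂
  have hb : b₁ = b₂ := by
    funext j
    show (u, b₁).2 j = (u, b₂).2 j
    have e1 := bfull_ord (⟨u, b₁⟩ : Col m t q) j
    have e2 := bfull_ord (⟨u, b₂⟩ : Col m t q) j
    rw [← e1, ← e2, ← hg₁ _ (ords (⟨u, b₁⟩ : Col m t q) j).2,
      ← hg₂ _ (ords (⟨u, b₂⟩ : Col m t q) j).2]
    rfl
  subst hb
  refine ⟨funext fun i => ?_, rfl⟩
  by_cases hi : i ∈ u.1
  · have : i = ((ords (⟨u, b₁⟩ : Col m t q)) ((ords (⟨u, b₁⟩ : Col m t q)).symm ⟨i, hi⟩) : Fin m) := by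
      rw [OrderIso.apply_symm_apply]
    rw [this, hd₁, hd₂]
  · rw [← hg₁' _ hi, ← hg₂' _ hi]

lemma P0_main [NeZero q] {f₁ f₂ : Row m q} {c₁ c₂ : Col m t q} {s : Sym m t q}
    (hne : (f₁, c₁) ≠ (f₂, c₂)) (h₁ : P0 f₁ c₁ = some s) (h₂ : P0 f₂ c₂ = some s) :
    f₁ ≠ f₂ ∧ c₁ ≠ c₂ ∧ P0 f₁ c₂ = none ∧ P0 f₂ c₁ = none := by
  have hTT : c₁.1.1 ≠ c₂.1.1 := by
    intro h
    obtain ⟨hf, hc⟩ := P0_same_T h₁ h₂ (Subtype.ext h)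
    exact hne (by rw [hf, hc])
  obtain ⟨-, hg₁, hg₁', -⟩ := P0_eq_some h₁
  obtain ⟨hs₁, -, -, -⟩ := P0_eq_some h₁
  obtain ⟨hs₂, hg₂, hg₂', -⟩ := P0_eq_some h₂
  have hex₁ : ∃ i, i ∈ c₁.1.1 ∧ i ∉ c₂.1.1 := by
    by_contra h
    push_neg at h
    exact hTT (Finset.eq_of_subset_of_card_le h (by rw [c₁.1.2, c₂.1.2]))
  have hex₂ : ∃ i, i ∈ c₂.1.1 ∧ i ∉ c₁.1.1 := by
    by_contra h
    push_neg at h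
    exact hTT (Finset.eq_of_subset_of_card_le h (by rw [c₁.1.2, c₂.1.2])).symm
  obtain ⟨i₁, hi₁, hi₁'⟩ := hex₁
  obtain ⟨i₂, hi₂, hi₂'⟩ := hex₂
  refine ⟨?_, fun h => hTT (by rw [h]), ?_, ?_⟩
  · intro h
    subst h
    exact hs₁ i₁ hi₁ (by rw [← hg₂' _ hi₁', hg₁ _ hi₁])
  · rw [P0_none_iff]
    push_neg
    exact ⟨i₂, hi₂, by rw [← hg₁' _ hi₂', hg₂ _ hi₂]⟩
  · rw [P0_none_iff]
    push_neg
    exact ⟨i₁, hi₁, by rw [← hg₂' _ hi₁', hg₁ _ hi₁]⟩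

lemma P0_surj [NeZero q] (htm : t ≤ m) (s : Sym m t q) :
    ∃ (f : Row m q) (c : Col m t q), P0 f c = some s := by
  obtain ⟨T, -, hT⟩ := Finset.exists_subset_card_eq
    (s := (Finset.univ : Finset (Fin m))) (n := t) (by simpa using htm)
  set c : Col m t q := (⟨T, hT⟩, fun j => s.2 (T.orderIsoOfFin hT j)) with hc
  have hordc : ords c = T.orderIsoOfFin hT := rfl
  have hbf : ∀ i ∈ T, bfull c i = s.2 i := by
    intro i hi
    rw [bfull_mem c (by exact hi)]
    show s.2 ((T.orderIsoOfFin hT) ((ords c).symm ⟨i, hi⟩) : Fin m) = s.2 i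
    rw [hordc, OrderIso.apply_symm_apply]
  set f : Row m q := fun i =>
    if h : i ∈ T then emb (s.2 i) (s.1 ((T.orderIsoOfFin hT).symm ⟨i, h⟩)) else s.2 i with hf
  have hfi : ∀ i (h : i ∈ T), f i = emb (s.2 i) (s.1 ((T.orderIsoOfFin hT).symm ⟨i, h⟩)) := by
    intro i h; rw [hf]; exact dif_pos h
  have hcond : ∀ i ∈ c.1.1, f i ≠ bfull c i := by
    intro i hi
    rw [hbf i hi, hfi i hi]
    exact emb_ne _ _
  refine ⟨f, c, ?_⟩
  unfold P0
  rw [dif_pos hcond]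
  congr 1
  have heq : ∀ j : Fin t, f (ords c j) = emb (bfull c (ords c j)) (s.1 j) := by
    intro j
    rw [hfi _ (ords c j).2, hbf _ (ords c j).2]
    congr 1
    have : (⟨(ords c j : Fin m), (ords c j).2⟩ : {x : Fin m // x ∈ T}) = ords c j := rfl
    rw [hordc] at this ⊢
    rw [this, OrderIso.symm_apply_apply]
  refine Prod.ext (funext fun j => ?_) (funext fun i => ?_)
  · exact delta_eq_of (hcond _ (ords c j).2) (heq j)
  · simp only
    by_cases hi : i ∈ c.1.1
    · rw [if_pos hi, hbf i hi]
    · rw [if_neg hi, hf]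
      exact dif_neg hi

lemma P0_count [NeZero q] (c : Col m t q) :
    (Finset.univ.filter (fun f : Row m q => P0 f c ≠ none)).card
      = (q - 1) ^ t * q ^ (m - t) := by
  have hset : Finset.univ.filter (fun f : Row m q => P0 f c ≠ none) =
      Fintype.piFinset (fun i : Fin m =>
        if i ∈ c.1.1 then Finset.univ.erase (bfull c i) else Finset.univ) := by
    ext f
    simp only [Finset.mem_filter, Finset.mem_univ, true_and, Fintype.mem_piFinset,
      Ne, P0_none_iff, not_not]
    constructor
    · intro h i
      split_ifs with hi
      · exact Finset.mem_erase.mpr ⟨h i hi, Finset.mem_univ _⟩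
      · exact Finset.mem_univ _
    · intro h i hi
      have hh := h i
      rw [if_pos hi] at hh
      exact (Finset.mem_erase.mp hh).1
  rw [hset, Fintype.card_piFinset]
  have hcard : ∀ i : Fin m,
      ((if i ∈ c.1.1 then Finset.univ.erase (bfull c i) else Finset.univ) : Finset (Fin q)).card
        = if i ∈ c.1.1 then q - 1 else q := by
    intro i
    split_ifs
    · rw [Finset.card_erase_of_mem (Finset.mem_univ _), Finset.card_univ, Fintype.card_fin]
    · rw [Finset.card_univ, Fintype.card_fin]
  rw [Finset.prod_congr rfl (fun i _ => hcard i),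
    Finset.prod_ite (fun _ => q - 1) (fun _ => q), Finset.prod_const, Finset.prod_const,
    Finset.filter_univ_mem, Finset.filter_not, Finset.filter_univ_mem,
    Finset.card_sdiff_of_subset (Finset.subset_univ _), Finset.card_univ, Fintype.card_fin, c.1.2]

end PDAConstr




/-- A `(K,F,S)` placement delivery array: an `F × K` array with entries in
`{*} ∪ {0,...,S-1}` (a star is modelled by `none`), such that every integer
appears at least once, and whenever two distinct cells contain the same
integer `s`, they lie in distinct rows and distinct columns and the two
cells at the remaining corners of the `2 × 2` subarray they determine are
both stars. -/
def IsPDA (F K S : ℕ) (P : Fin F → Fin K → Option (Fin S)) : Prop :=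
  (∀ s : Fin S, ∃ j k, P j k = some s) ∧
  ∀ (j₁ j₂ : Fin F) (k₁ k₂ : Fin K) (s : Fin S),
    (j₁, k₁) ≠ (j₂, k₂) → P j₁ k₁ = some s → P j₂ k₂ = some s →
      j₁ ≠ j₂ ∧ k₁ ≠ k₂ ∧ P j₁ k₂ = none ∧ P j₂ k₁ = none

/-- A `(K,F,Z,S)` placement delivery array: a `(K,F,S)` PDA each of whose
columns contains exactly `Z` stars. -/
def IsPDAWith (F K Z S : ℕ) (P : Fin F → Fin K → Option (Fin S)) : Prop :=
  IsPDA F K S P ∧ ∀ k : Fin K, {j : Fin F | P j k = none}.ncard = Z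

/-- The second PDA of Shangguan–Zhang–Ge: for all integers `m, t, q` with
`0 < t < m` and `q ≥ 2`, there exists a
`(C(m,t)·q^t, q^m, q^m − (q−1)^t·q^{m−t}, (q−1)^t·q^m)` placement delivery
array (obtained from Construction 1 by taking the row index set to be all of
`{0,...,q-1}^m` and the full column index set). -/

theorem exists_PDA_full_row_index (m t q : ℕ)
    (ht : 0 < t) (htm : t < m) (hq : 2 ≤ q) :
    ∃ P : Fin (q ^ m) → Fin (m.choose t * q ^ t) →
        Option (Fin ((q - 1) ^ t * q ^ m)),
      IsPDAWith (q ^ m) (m.choose t * q ^ t)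
        (q ^ m - (q - 1) ^ t * q ^ (m - t))
        ((q - 1) ^ t * q ^ m) P := by
  haveI : NeZero q := ⟨by omega⟩
  have cardRow : Fintype.card (PDAConstr.Row m q) = q ^ m := by
    simp [PDAConstr.Row]
  have cardCol : Fintype.card (PDAConstr.Col m t q) = m.choose t * q ^ t := by
    simp [PDAConstr.Col]
  have cardSym : Fintype.card (PDAConstr.Sym m t q) = (q - 1) ^ t * q ^ m := by
    simp [PDAConstr.Sym]
  let eF := (Fintype.equivFinOfCardEq cardRow).symm
  let eK := (Fintype.equivFinOfCardEq cardCol).symm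
  let eS := Fintype.equivFinOfCardEq cardSym
  refine ⟨fun j k => (PDAConstr.P0 (eF j) (eK k)).map eS, ⟨?_, ?_⟩, ?_⟩
  · intro s
    obtain ⟨f, c, h⟩ := PDAConstr.P0_surj (q := q) htm.le (eS.symm s)
    exact ⟨eF.symm f, eK.symm c, by simp [h]⟩
  · intro j₁ j₂ k₁ k₂ s hne h₁ h₂
    rw [Option.map_eq_some_iff] at h₁ h₂
    obtain ⟨a₁, ha₁, rfl⟩ := h₁
    obtain ⟨a₂, ha₂, he⟩ := h₂
    obtain rfl : a₂ = a₁ := eS.injective he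
    have hne' : ((eF j₁ : PDAConstr.Row m q), eK k₁) ≠ (eF j₂, eK k₂) := by
      intro h
      rw [Prod.mk.injEq] at h
      exact hne (by rw [Prod.mk.injEq]; exact ⟨eF.injective h.1, eK.injective h.2⟩)
    obtain ⟨hf, hc, hn1, hn2⟩ := PDAConstr.P0_main hne' ha₁ ha₂
    refine ⟨fun h => hf (by rw [h]), fun h => hc (by rw [h]), ?_, ?_⟩
    · simp [Option.map_eq_none_iff, hn1]
    · simp [Option.map_eq_none_iff, hn2]
  · intro k
    have hset : {j : Fin (q ^ m) | (PDAConstr.P0 (eF j) (eK k)).map eS = none} =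
        ↑(Finset.univ.filter
          (fun j : Fin (q ^ m) => PDAConstr.P0 (eF j) (eK k) = none)) := by
      ext j
      simp [Option.map_eq_none_iff]
    show {j : Fin (q ^ m) | (PDAConstr.P0 (eF j) (eK k)).map eS = none}.ncard = _
    rw [hset, Set.ncard_coe_finset]
    have hsplit := Finset.card_filter_add_card_filter_not
      (s := (Finset.univ : Finset (Fin (q ^ m))))
      (p := fun j => PDAConstr.P0 (eF j) (eK k) = none)
    have hbij : (Finset.univ.filter
          (fun j : Fin (q ^ m) => ¬ PDAConstr.P0 (eF j) (eK k) = none)).card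
        = (Finset.univ.filter
          (fun f : PDAConstr.Row m q => PDAConstr.P0 f (eK k) ≠ none)).card := by
      apply Finset.card_equiv eF
      intro j
      simp
    rw [PDAConstr.P0_count] at hbij
    rw [Finset.card_univ, Fintype.card_fin, hbij] at hsplit
    exact Nat.eq_sub_of_add_eq hsplit
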